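/- Let ε_X, ε_Y, ε_Z ∈ {+1, −1} and let X, Y, Z ∈ I. Then the fusion multiplicity formula of Theorem 5.1(3) agrees with the permutation-orbifold formula of Borisov–Halpern–Schweigert: (1/2)·[ (θhalf_Z/θhalf_X)·ε_X ε_Y ε_Z·∑_{P',Q∈I} S_{Z*P'} S_{X*Q} (θ_{P'}/θ_Q)² N^Y_{P'Q} + ∑_{W∈I} N^W_{YY} N^X_{WZ} ] = (1/2)·[ ∑_{R∈I} S_{YR}² S_{ZR} S_{X*R} / S_{1R}² + ε_X ε_Y ε_Z·∑_{R∈I} S_{YR} P_{ZR} P_{X*R} / S_{1R} ]. -/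

import Mathlib

open Finset Matrix

/-- The fusion multiplicity formula of Theorem 5.1(3) agrees with the
permutation-orbifold formula of Borisov–Halpern–Schweigert:
`(1/2)[ (θhalf_Z/θhalf_X) εX εY εZ ∑_{P',Q} S_{Z*P'} S_{X*Q} (θ_{P'}/θ_Q)² N^Y_{P'Q}
        + ∑_W N^W_{YY} N^X_{WZ} ]
  = (1/2)[ ∑_R S_{YR}² S_{ZR} S_{X*R} / S_{1R}²
        + εX εY εZ ∑_R S_{YR} P_{ZR} P_{X*R} / S_{1R} ]`. -/
theorem fusion_formula_agrees_with_BHS {I : Type*} [Fintype I] [DecidableEq I]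
    (one : I) (star : I → I)
    (hstar : ∀ X, star (star X) = X) (hone : star one = one)
    (S : Matrix I I ℂ) (hSsymm : ∀ X Y, S X Y = S Y X)
    (θ : I → ℂ) (hθ : ∀ X, θ X ≠ 0) (hθs : ∀ X, θ (star X) = θ X)
    (ζ : ℂ) (hζ : ζ ≠ 0)
    (C : Matrix I I ℂ) (hC : ∀ X Y, C X Y = if Y = star X then 1 else 0)
    (T : Matrix I I ℂ) (hT : T = Matrix.diagonal (fun X => θ X / ζ))
    (hST : (S * T) ^ 3 = C)
    (hSS : S ^ 2 = C)
    (hS1 : ∀ R, S one R ≠ 0)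
    (N : I → I → I → ℂ)
    (hN : ∀ Z X Y, N Z X Y = ∑ R, S X R * S Y R * S (star Z) R / S one R)
    (θhalf : I → ℂ) (hθhalf : ∀ X, θhalf X ^ 2 = θ X)
    (hθhalfs : ∀ X, θhalf (star X) = θhalf X)
    (ζhalf : ℂ) (hζhalf : ζhalf ^ 2 = ζ) (hζhalf0 : ζhalf ≠ 0)
    (Thalf : Matrix I I ℂ) (hThalf : Thalf = Matrix.diagonal (fun X => θhalf X / ζhalf))
    (P : Matrix I I ℂ) (hP : P = Thalf * S * T ^ 2 * S * Thalf)
    (εX εY εZ : ℂ)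
    (hεX : εX = 1 ∨ εX = -1) (hεY : εY = 1 ∨ εY = -1) (hεZ : εZ = 1 ∨ εZ = -1)
    (X Y Z : I) :
    (1 / 2 : ℂ) *
        ((θhalf Z / θhalf X) * (εX * εY * εZ) *
            (∑ P', ∑ Q, S (star Z) P' * S (star X) Q * (θ P' / θ Q) ^ 2 * N Y P' Q)
          + ∑ W, N W Y Y * N X W Z)
      = (1 / 2 : ℂ) *
        ((∑ R, S Y R ^ 2 * S Z R * S (star X) R / S one R ^ 2)
          + (εX * εY * εZ) * ∑ R, S Y R * P Z R * P (star X) R / S one R) := by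

  -- abbreviations
  have hθh0 : ∀ A, θhalf A ≠ 0 := by
    intro A h
    exact hθ A (by rw [← hθhalf A, h]; ring)
  set T' : Matrix I I ℂ := Matrix.diagonal (fun A => ζ / θ A) with hT'
  -- basic matrix identities
  have hCC : C * C = 1 := by
    ext i j
    rw [Matrix.mul_apply]
    simp only [hC, Matrix.one_apply]
    rw [Finset.sum_eq_single (star i)]
    · simp [hstar, eq_comm]
    · intro b _ hb; simp [hb]
    · simp
  have hCS : C * S = S * C := by rw [← hSS, pow_two, mul_assoc]
  have dcong : ∀ (f g : I → ℂ), (∀ i, f i = g i) →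
      Matrix.diagonal f = Matrix.diagonal g := by
    intro f g h; exact congrArg Matrix.diagonal (funext h)
  have hCdiag : ∀ (d : I → ℂ), (∀ A, d (star A) = d A) →
      C * Matrix.diagonal d = Matrix.diagonal d * C := by
    intro d hd
    ext i j
    rw [Matrix.mul_apply, Matrix.mul_apply,
      Finset.sum_eq_single j (fun b _ hb => by rw [Matrix.diagonal_apply_ne d hb, mul_zero])
        (by simp),
      Finset.sum_eq_single i (fun b _ hb => by rw [Matrix.diagonal_apply_ne' d hb, zero_mul])
        (by simp),
      Matrix.diagonal_apply_eq, Matrix.diagonal_apply_eq, hC]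
    by_cases h : j = star i
    · rw [if_pos h, h, hd, one_mul, mul_one]
    · rw [if_neg h, zero_mul, mul_zero]
  have hCT : C * T = T * C := by rw [hT]; exact hCdiag _ (fun A => by rw [hθs])
  have hCT' : C * T' = T' * C := by rw [hT']; exact hCdiag _ (fun A => by rw [hθs])
  have hTT' : T * T' = 1 := by
    rw [hT, hT', Matrix.diagonal_mul_diagonal,
      dcong _ (fun _ => (1 : ℂ)) (fun i => by
        rw [div_mul_div_comm, mul_comm ζ (θ i)]
        exact div_self (mul_ne_zero (hθ i) hζ)), Matrix.diagonal_one]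
  have hSCS : S * C * S = 1 := by rw [mul_assoc, hCS, ← mul_assoc, ← pow_two, hSS, hCC]
  -- pointwise (right-factor) helpers
  have p1 : ∀ A : Matrix I I ℂ, S * (C * (S * A)) = A := by
    intro A; rw [← mul_assoc, ← mul_assoc, hSCS, one_mul]
  have p3 : ∀ A : Matrix I I ℂ, C * (C * A) = A := by
    intro A; rw [← mul_assoc, hCC, one_mul]
  have pcs : ∀ A : Matrix I I ℂ, C * (S * A) = S * (C * A) := by
    intro A; rw [← mul_assoc, hCS, mul_assoc]
  have pct' : ∀ A : Matrix I I ℂ, C * (T' * A) = T' * (C * A) := by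
    intro A; rw [← mul_assoc, hCT', mul_assoc]
  -- the key modular relation:  S T S T = T' S
  have key : S * T * (S * T) = T' * S := by
    have h1 : S * T * (T' * (S * C)) = 1 := by
      calc S * T * (T' * (S * C)) = S * (T * T') * (S * C) := by
            simp only [mul_assoc]
        _ = S * (S * C) := by rw [hTT', mul_one]
        _ = C * C := by rw [← mul_assoc, ← pow_two, hSS]
        _ = 1 := hCC
    calc S * T * (S * T)
        = S * T * (S * T) * (S * T * (T' * (S * C))) := by rw [h1, mul_one]
      _ = (S * T) ^ 3 * (T' * (S * C)) := by
          rw [pow_succ, pow_two]; simp only [mul_assoc]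
      _ = C * (T' * (S * C)) := by rw [hST]
      _ = T' * (S * (C * C)) := by rw [pct', pcs]
      _ = T' * S := by rw [hCC, mul_one]
  -- T S T = C S T' S
  have key2 : T * (S * T) = C * (S * (T' * S)) := by
    have := congrArg (fun A : Matrix I I ℂ => C * (S * A)) key
    simp only [mul_assoc] at this ⊢
    rw [← this, ← mul_assoc S S, ← pow_two, hSS, p3]
  -- T (S T T S T) = C (S T' T' S)
  have key3 : T * (S * (T * (T * (S * T)))) = C * (S * (T' * (T' * S))) := by
    calc T * (S * (T * (T * (S * T))))
        = T * (S * T) * (T * (S * T)) := by simp only [mul_assoc]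
      _ = C * (S * (T' * S)) * (C * (S * (T' * S))) := by rw [key2]
      _ = C * (S * (T' * (S * (C * (S * (T' * S)))))) := by simp only [mul_assoc]
      _ = C * (S * (T' * (T' * S))) := by rw [p1]
  have hM' : S * (T' * (T' * S)) = C * (T * (S * (T * (T * (S * T))))) := by
    rw [key3, p3]
  -- C commutes with M = S T T S
  have hCMC : C * (S * (T * (T * S))) = S * (T * (T * S)) * C := by
    have pct : ∀ A : Matrix I I ℂ, C * (T * A) = T * (C * A) := by
      intro A; rw [← mul_assoc, hCT, mul_assoc]
    rw [pcs, pct, pct, hCS]; simp only [mul_assoc]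
  -- entrywise lemmas
  have eC : ∀ (A : Matrix I I ℂ) i j, (C * A) i j = A (star i) j := by
    intro A i j
    rw [Matrix.mul_apply]
    simp only [hC, ite_mul, one_mul, zero_mul]
    rw [Finset.sum_eq_single (star i)]
    · simp
    · intro b _ hb; simp [hb]
    · simp
  have eC2 : ∀ (A : Matrix I I ℂ) i j, (A * C) i j = A i (star j) := by
    intro A i j
    rw [Matrix.mul_apply]
    simp only [hC]
    rw [Finset.sum_eq_single (star j)]
    · simp [hstar]
    · intro b _ hb
      have : ¬ (j = star b) := fun h => hb (by rw [h, hstar])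
      simp [this]
    · simp
  have eM : ∀ A R, (S * (T * (T * S))) A R
      = ∑ Q, S A Q * ((θ Q / ζ) ^ 2 * S Q R) := by
    intro A R
    have hd : T * (T * S) = Matrix.diagonal (fun A => (θ A / ζ) ^ 2) * S := by
      rw [hT, ← mul_assoc, Matrix.diagonal_mul_diagonal]
      congr 1
      exact dcong _ _ (fun i => by ring)
    rw [hd, Matrix.mul_apply]
    congr 1; funext Q
    rw [Matrix.diagonal_mul]
  have eM2 : ∀ A R, (S * (T' * (T' * S))) A R
      = ∑ Q, S A Q * ((ζ / θ Q) ^ 2 * S Q R) := by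
    intro A R
    have hd : T' * (T' * S) = Matrix.diagonal (fun A => (ζ / θ A) ^ 2) * S := by
      rw [hT', ← mul_assoc, Matrix.diagonal_mul_diagonal]
      congr 1
      exact dcong _ _ (fun i => by ring)
    rw [hd, Matrix.mul_apply]
    congr 1; funext Q
    rw [Matrix.diagonal_mul]

  -- entry lemmas for diagonal multiplications
  have eT : ∀ (B : Matrix I I ℂ) (i j : I), (T * B) i j = (θ i / ζ) * B i j := by
    intro B i j; rw [hT, Matrix.diagonal_mul]
  have eT2 : ∀ (B : Matrix I I ℂ) (i j : I), (B * T) i j = B i j * (θ j / ζ) := by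
    intro B i j; rw [hT, Matrix.mul_diagonal]
  have eTh : ∀ (B : Matrix I I ℂ) (i j : I), (Thalf * B) i j = (θhalf i / ζhalf) * B i j := by
    intro B i j; rw [hThalf, Matrix.diagonal_mul]
  have eTh2 : ∀ (B : Matrix I I ℂ) (i j : I), (B * Thalf) i j = B i j * (θhalf j / ζhalf) := by
    intro B i j; rw [hThalf, Matrix.mul_diagonal]
  -- C-symmetry facts for S and M
  have scCM : ∀ A R, (S * (T * (T * S))) (star A) R = (S * (T * (T * S))) A (star R) := by
    intro A R
    have h1 := congrFun (congrFun hCMC A) R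
    rw [eC, eC2] at h1
    exact h1
  have sS : ∀ A B, S (star A) (star B) = S A B := by
    intro A B
    have hCSC : C * (S * C) = S := by rw [pcs, hCC, mul_one]
    have h1 := congrFun (congrFun hCSC A) B
    rw [eC, eC2] at h1
    exact h1
  have s1 : ∀ R, S one (star R) = S one R := by
    intro R
    have h1 := sS one R
    rw [hone] at h1
    exact h1
  -- Verlinde-type orthogonality in scalar form
  have sc1 : ∀ R R', (∑ W, S (star W) R * S W R') = if R' = R then (1 : ℂ) else 0 := by
    intro R R'
    have h1 : S * (C * S) = 1 := by rw [← mul_assoc, hSCS]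
    have h2 := congrFun (congrFun h1 R) R'
    rw [Matrix.mul_apply] at h2
    simp only [eC] at h2
    calc (∑ W, S (star W) R * S W R')
        = ∑ W, S R W * S (star W) R' := by
          refine Fintype.sum_equiv (Function.Involutive.toPerm star hstar) _ _ (fun W => ?_)
          change S (star W) R * S W R' = S R (star W) * S (star (star W)) R'
          rw [hstar, hSsymm (star W) R]
      _ = (1 : Matrix I I ℂ) R R' := h2
      _ = if R' = R then (1 : ℂ) else 0 := by
          rw [Matrix.one_apply]
          exact if_congr eq_comm rfl rfl
  -- the twisted S-matrix identity:  S T'^2 S = (entrywise) conjugate of S T^2 S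
  have scM' : ∀ A R, (∑ Q, S A Q * ((ζ / θ Q) ^ 2 * S Q R))
      = (θ (star A) / ζ) * ((∑ Q, S (star A) Q * ((θ Q / ζ) ^ 2 * S Q R)) * (θ R / ζ)) := by
    intro A R
    have h1 := congrFun (congrFun hM' A) R
    rw [eM2, eC, eT] at h1
    have hZ : S * (T * (T * (S * T))) = S * (T * (T * S)) * T := by
      simp only [mul_assoc]
    rw [hZ, eT2, eM] at h1
    exact h1
  -- P entrywise
  have ePapp : ∀ A R, P A R
      = (θhalf A / ζhalf) * ((S * (T * (T * S))) A R * (θhalf R / ζhalf)) := by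
    intro A R
    have hPform : P = Thalf * (S * (T * (T * (S * Thalf)))) := by
      rw [hP, pow_two]; simp only [mul_assoc]
    have hZ : S * (T * (T * (S * Thalf))) = S * (T * (T * S)) * Thalf := by
      simp only [mul_assoc]
    rw [hPform, eTh, hZ, eTh2]
  -- Part A : the crossed-channel double fusion sum
  have EqA : (∑ W, N W Y Y * N X W Z)
      = ∑ R, S Y R ^ 2 * S Z R * S (star X) R / S one R ^ 2 := by
    calc (∑ W, N W Y Y * N X W Z)
        = ∑ W, ∑ R, ∑ R', (S Y R * S Y R * S (star W) R / S one R)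
            * (S W R' * S Z R' * S (star X) R' / S one R') := by
          refine Finset.sum_congr rfl (fun W _ => ?_)
          rw [hN, hN, Finset.sum_mul_sum]
      _ = ∑ R, ∑ W, ∑ R', (S Y R * S Y R * S (star W) R / S one R)
            * (S W R' * S Z R' * S (star X) R' / S one R') := Finset.sum_comm
      _ = ∑ R, ∑ R', ∑ W, (S Y R * S Y R * S (star W) R / S one R)
            * (S W R' * S Z R' * S (star X) R' / S one R') :=
          Finset.sum_congr rfl (fun R _ => Finset.sum_comm)
      _ = ∑ R, ∑ R', (if R' = R then (1 : ℂ) else 0)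
            * ((S Y R * S Y R / S one R) * (S Z R' * S (star X) R' / S one R')) := by
          refine Finset.sum_congr rfl (fun R _ => Finset.sum_congr rfl (fun R' _ => ?_))
          rw [← sc1 R R', Finset.sum_mul]
          exact Finset.sum_congr rfl (fun W _ => by ring)
      _ = ∑ R, S Y R ^ 2 * S Z R * S (star X) R / S one R ^ 2 := by
          refine Finset.sum_congr rfl (fun R _ => ?_)
          simp only [ite_mul, one_mul, zero_mul]
          rw [Finset.sum_ite_eq' Finset.univ R
            (fun R' => (S Y R * S Y R / S one R) * (S Z R' * S (star X) R' / S one R'))]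
          simp only [Finset.mem_univ, if_true]
          field_simp
  -- Part B : the twisted-sector sum
  have EqB : (θhalf Z / θhalf X) *
      (∑ P', ∑ Q, S (star Z) P' * S (star X) Q * (θ P' / θ Q) ^ 2 * N Y P' Q)
      = ∑ R, S Y R * P Z R * P (star X) R / S one R := by
    have hD : (∑ P', ∑ Q, S (star Z) P' * S (star X) Q * (θ P' / θ Q) ^ 2 * N Y P' Q)
        = ∑ R, (S (star Y) R / S one R) *
            ((∑ P', S (star Z) P' * ((θ P' / ζ) ^ 2 * S P' R)) *
             (∑ Q, S (star X) Q * ((ζ / θ Q) ^ 2 * S Q R))) := by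
      calc (∑ P', ∑ Q, S (star Z) P' * S (star X) Q * (θ P' / θ Q) ^ 2 * N Y P' Q)
          = ∑ P', ∑ Q, ∑ R, S (star Z) P' * S (star X) Q * (θ P' / θ Q) ^ 2
              * (S P' R * S Q R * S (star Y) R / S one R) := by
            refine Finset.sum_congr rfl (fun P' _ => Finset.sum_congr rfl (fun Q _ => ?_))
            rw [hN, Finset.mul_sum]
        _ = ∑ P', ∑ R, ∑ Q, S (star Z) P' * S (star X) Q * (θ P' / θ Q) ^ 2
              * (S P' R * S Q R * S (star Y) R / S one R) :=
            Finset.sum_congr rfl (fun P' _ => Finset.sum_comm)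
        _ = ∑ R, ∑ P', ∑ Q, S (star Z) P' * S (star X) Q * (θ P' / θ Q) ^ 2
              * (S P' R * S Q R * S (star Y) R / S one R) := Finset.sum_comm
        _ = ∑ R, (S (star Y) R / S one R) *
              ((∑ P', S (star Z) P' * ((θ P' / ζ) ^ 2 * S P' R)) *
               (∑ Q, S (star X) Q * ((ζ / θ Q) ^ 2 * S Q R))) := by
            refine Finset.sum_congr rfl (fun R _ => ?_)
            rw [Finset.sum_mul_sum, Finset.mul_sum]
            refine Finset.sum_congr rfl (fun P' _ => ?_)
            rw [Finset.mul_sum]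
            refine Finset.sum_congr rfl (fun Q _ => ?_)
            have hsplit : (θ P' / θ Q) ^ 2 = (θ P' / ζ) ^ 2 * (ζ / θ Q) ^ 2 := by
              rw [← mul_pow, div_mul_div_comm, mul_comm ζ (θ Q),
                mul_div_mul_right _ _ hζ]
            rw [hsplit]
            ring
    have hfac : ∀ R, (S (star Y) R / S one R) *
        ((∑ P', S (star Z) P' * ((θ P' / ζ) ^ 2 * S P' R)) *
         (∑ Q, S (star X) Q * ((ζ / θ Q) ^ 2 * S Q R)))
        = (S (star Y) R / S one R) *
          ((S * (T * (T * S))) Z (star R) *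
           ((θ X / ζ) * ((S * (T * (T * S))) (star X) (star R) * (θ R / ζ)))) := by
      intro R
      have h1 : (∑ P', S (star Z) P' * ((θ P' / ζ) ^ 2 * S P' R))
          = (S * (T * (T * S))) Z (star R) := by
        rw [← eM, scCM]
      have h3 := scM' (star X) R
      rw [hstar] at h3
      have h4 := scCM (star X) R
      rw [hstar] at h4
      have h2 : (∑ Q, S (star X) Q * ((ζ / θ Q) ^ 2 * S Q R))
          = (θ X / ζ) * ((S * (T * (T * S))) (star X) (star R) * (θ R / ζ)) := by
        rw [h3, ← eM, h4]
      rw [h1, h2]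
    rw [hD, Finset.sum_congr rfl (fun R _ => hfac R)]
    have hre : (∑ R, (S (star Y) R / S one R) *
          ((S * (T * (T * S))) Z (star R) *
           ((θ X / ζ) * ((S * (T * (T * S))) (star X) (star R) * (θ R / ζ)))))
        = ∑ R, (S Y R / S one R) *
            ((S * (T * (T * S))) Z R *
             ((θ X / ζ) * ((S * (T * (T * S))) (star X) R * (θ R / ζ)))) := by
      refine Fintype.sum_equiv (Function.Involutive.toPerm star hstar) _ _ (fun R => ?_)
      change (S (star Y) R / S one R) *
          ((S * (T * (T * S))) Z (star R) *
           ((θ X / ζ) * ((S * (T * (T * S))) (star X) (star R) * (θ R / ζ))))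
        = (S Y (star R) / S one (star R)) *
          ((S * (T * (T * S))) Z (star R) *
           ((θ X / ζ) * ((S * (T * (T * S))) (star X) (star R) * (θ (star R) / ζ))))
      rw [hθs, s1]
      have h5 := sS Y (star R)
      rw [hstar] at h5
      rw [← h5]
    rw [hre, Finset.mul_sum]
    refine Finset.sum_congr rfl (fun R _ => ?_)
    rw [ePapp Z R, ePapp (star X) R, hθhalfs]
    have hx := hθh0 X
    have hr := hθh0 R
    have h1r := hS1 R
    generalize (S * (T * (T * S))) Z R = m1
    generalize (S * (T * (T * S))) (star X) R = m2
    rw [← hθhalf X, ← hθhalf R, ← hζhalf]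
    linear_combination (θhalf Z * S Y R * m1 * m2 * θhalf R ^ 2 * ζhalf⁻¹ ^ 4
      * (S one R)⁻¹ * θhalf X) * mul_inv_cancel₀ hx
  -- assemble
  rw [← EqA, ← EqB]
  ring
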